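/- Let K ⊆ L ⊆ M be number fields such that [L : K] = p is a prime number, the extension M/L is Galois, and p does not divide [M : L]. Let Q be a nonzero prime ideal of O_M, set q = Q ∩ O_K, and suppose that the residue degree of Q over q equals p, i.e. [O_M/Q : O_K/q] = p. Then the ideal qO_L is a prime ideal of O_L; in particular, q is inert in L. -/

import Mathlib

open NumberField

open Ideal UniqueFactorizationMonoid in
/-- Galois transitivity on primes: if `P` is prime, `P'` maximal, lying over the same prime of
`A`, then `P' = σ⁻¹ P` for some `σ` in the Galois group. -/
lemma exists_comap_galRestrict_eq
    (A K L B : Type*) [CommRing A] [CommRing B] [Field K] [Field L]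
    [IsDomain A] [IsIntegrallyClosed A]
    [Algebra A K] [IsFractionRing A K]
    [Algebra B L] [Algebra K L] [Algebra A L] [Algebra A B]
    [IsScalarTower A B L] [IsScalarTower A K L]
    [IsIntegralClosure B A L] [FiniteDimensional K L] [IsGalois K L]
    [IsDomain B]
    {P P' : Ideal B} [hP : P.IsPrime] [hP' : P'.IsMaximal]
    (h : P.comap (algebraMap A B) = P'.comap (algebraMap A B)) :
    ∃ σ : L ≃ₐ[K] L, P.comap (galRestrict A K L B σ) = P' := by
  classical
  have hmem : (P' : Set B) ⊆
      ⋃ σ ∈ ((Finset.univ : Finset (L ≃ₐ[K] L)) : Set (L ≃ₐ[K] L)),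
        (P.comap (galRestrict A K L B σ) : Set B) := by
    intro x hx
    have hnorm := prod_galRestrict_eq_norm A K L B x
    have h1 : galRestrict A K L B 1 x = x := by rw [map_one]; rfl
    have hprod : (∏ σ : L ≃ₐ[K] L, galRestrict A K L B σ x) ∈ P' := by
      rw [← Finset.mul_prod_erase _ _ (Finset.mem_univ (1 : L ≃ₐ[K] L)), h1]
      exact Ideal.mul_mem_right _ _ hx
    have hprodP : (∏ σ : L ≃ₐ[K] L, galRestrict A K L B σ x) ∈ P := by
      rw [hnorm] at hprod ⊢
      have : _ ∈ P'.comap (algebraMap A B) := hprod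
      rw [← h] at this
      exact this
    obtain ⟨σ, -, hσ⟩ := Ideal.IsPrime.prod_mem_iff.mp hprodP
    exact Set.mem_iUnion₂.mpr ⟨σ, Finset.mem_univ σ, hσ⟩
  obtain ⟨σ, -, hle⟩ := (Ideal.subset_union_prime (1 : L ≃ₐ[K] L) 1
    (fun σ _ _ _ => Ideal.IsPrime.comap _)).mp hmem
  refine ⟨σ, (hP'.eq_of_le (Ideal.IsPrime.comap _).ne_top hle).symm⟩

open Ideal UniqueFactorizationMonoid in
/-- Let `K ⊆ L ⊆ M` be number fields with `[L : K] = p` prime, `M/L` Galois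
and `p ∤ [M : L]`.  If `Q` is a nonzero prime of `𝓞 M`, `q = Q ∩ 𝓞 K`, and the residue degree
of `Q` over `q` equals `p`, then `q 𝓞 L` is a prime ideal of `𝓞 L`, i.e. `q` is inert in
`L`. -/
theorem stmt_11 (p : ℕ) (hp : p.Prime)
    (K L M : Type*) [Field K] [Field L] [Field M]
    [NumberField K] [NumberField L] [NumberField M]
    [Algebra K L] [Algebra L M] [Algebra K M] [IsScalarTower K L M]
    (hdeg : Module.finrank K L = p) [IsGalois L M]
    (hndvd : ¬ p ∣ Module.finrank L M)
    (Q : Ideal (𝓞 M)) (hQ : Q.IsPrime) (hQ0 : Q ≠ ⊥)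
    (q : Ideal (𝓞 K)) (hq : q = Q.comap (algebraMap (𝓞 K) (𝓞 M)))
    (hres : Ideal.inertiaDeg' q Q = p) :
    (q.map (algebraMap (𝓞 K) (𝓞 L))).IsPrime := by
  classical
  haveI := hQ
  haveI hQmax : Q.IsMaximal := hQ.isMaximal hQ0
  set P₀ : Ideal (𝓞 L) := Q.comap (algebraMap (𝓞 L) (𝓞 M)) with hP₀
  haveI : P₀.IsPrime := Ideal.IsPrime.comap _
  have hP₀0 : P₀ ≠ ⊥ := fun h => hQ0 (Ideal.eq_bot_of_comap_eq_bot h)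
  haveI hP₀max : P₀.IsMaximal := ‹P₀.IsPrime›.isMaximal hP₀0
  -- q = P₀ ∩ 𝓞 K
  have hq' : q = P₀.comap (algebraMap (𝓞 K) (𝓞 L)) := by
    rw [hq, hP₀, Ideal.comap_comap, ← IsScalarTower.algebraMap_eq]
  have hq0 : q ≠ ⊥ := by
    rw [hq']
    exact fun h => hP₀0 (Ideal.eq_bot_of_comap_eq_bot h)
  haveI hqmax : q.IsMaximal := hq' ▸ Ideal.IsMaximal.under (𝓞 K) P₀
  haveI : Q.LiesOver P₀ := ⟨rfl⟩
  haveI : P₀.LiesOver q := ⟨hq'⟩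
  haveI : Q.LiesOver q := ⟨hq⟩
  -- tower for inertia degrees
  have htower : p = Ideal.inertiaDeg' q P₀ *
      Ideal.inertiaDeg' P₀ Q := by
    rw [← hres, Ideal.inertiaDeg'_algebra_tower q P₀ Q]
  -- the inertia degree of Q over P₀ divides [M:L]
  have hfdvd : Ideal.inertiaDeg' P₀ Q ∣ Module.finrank L M := by
    have hsum := Ideal.sum_ramification_inertia (𝓞 M) L M hP₀0
    set t := (factors (Ideal.map (algebraMap (𝓞 L) (𝓞 M)) P₀)).toFinset with ht
    have hconst : ∀ P' ∈ t,
        Ideal.ramificationIdx' P₀ P' *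
          Ideal.inertiaDeg' P₀ P' =
        Ideal.ramificationIdx' P₀ Q *
          Ideal.inertiaDeg' P₀ Q := by
      intro P' hP'
      rw [Multiset.mem_toFinset] at hP'
      have hprime : Prime P' := prime_of_factor _ hP'
      haveI hP'prime : P'.IsPrime := Ideal.isPrime_of_prime hprime
      have hle : Ideal.map (algebraMap (𝓞 L) (𝓞 M)) P₀ ≤ P' :=
        Ideal.le_of_dvd (dvd_of_mem_factors hP')
      have hcomap : Q.comap (algebraMap (𝓞 L) (𝓞 M)) = P'.comap (algebraMap (𝓞 L) (𝓞 M)) := by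
        refine (hP₀max.eq_of_le (Ideal.IsPrime.comap _).ne_top ?_)
        rw [← Ideal.map_le_iff_le_comap]
        exact hle
      haveI hP'max : P'.IsMaximal := hP'prime.isMaximal hprime.ne_zero
      obtain ⟨σ, hσ⟩ := exists_comap_galRestrict_eq (𝓞 L) L M (𝓞 M) hcomap
      rw [← hσ, Ideal.ramificationIdx'_comap_eq _ (galRestrict (𝓞 L) L M (𝓞 M) σ),
        Ideal.inertiaDeg'_comap_eq _ (galRestrict (𝓞 L) L M (𝓞 M) σ)]
    rw [Finset.sum_congr rfl hconst, Finset.sum_const, smul_eq_mul] at hsum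
    exact ⟨t.card * Ideal.ramificationIdx' P₀ Q, by rw [← hsum]; ring⟩
  -- deduce f(P₀/q) = p
  have hf1 : Ideal.inertiaDeg' q P₀ = p := by
    have hdvd' : Ideal.inertiaDeg' P₀ Q ∣ p :=
      Dvd.intro_left _ htower.symm
    rcases hp.eq_one_or_self_of_dvd _ hdvd' with h1 | h1
    · rw [h1, mul_one] at htower; exact htower.symm
    · exact absurd (h1 ▸ hfdvd) hndvd
  -- sum formula over 𝓞 L
  have hsum := Ideal.sum_ramification_inertia (𝓞 L) K L hq0
  rw [hdeg] at hsum
  set I := Ideal.map (algebraMap (𝓞 K) (𝓞 L)) q with hI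
  have hI0 : I ≠ ⊥ := by
    intro h
    apply hq0
    have hle : q ≤ Ideal.comap (algebraMap (𝓞 K) (𝓞 L)) I := Ideal.le_comap_map
    rw [h, ← RingHom.ker_eq_comap_bot,
      (RingHom.injective_iff_ker_eq_bot _).mp (FaithfulSMul.algebraMap_injective (𝓞 K) (𝓞 L))] at hle
    exact le_bot_iff.mp hle
  have hIle : I ≤ P₀ := Ideal.map_le_iff_le_comap.mpr (le_of_eq hq')
  have hP₀mem : P₀ ∈ (factors I).toFinset := by
    rw [Multiset.mem_toFinset, factors_eq_normalizedFactors,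
      ← Multiset.count_ne_zero,
      ← Ideal.IsDedekindDomain.ramificationIdx'_eq_normalizedFactors_count hI0 ‹P₀.IsPrime› hP₀0]
    exact Ideal.IsDedekindDomain.ramificationIdx'_ne_zero hI0 ‹P₀.IsPrime› hIle
  -- positivity of each term
  have hpos : ∀ P' ∈ (factors I).toFinset,
      0 < Ideal.ramificationIdx' q P' *
        Ideal.inertiaDeg' q P' := by
    intro P' hP'
    rw [Multiset.mem_toFinset] at hP'
    have hprime : Prime P' := prime_of_factor _ hP'
    haveI hP'prime : P'.IsPrime := Ideal.isPrime_of_prime hprime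
    have hle : I ≤ P' := Ideal.le_of_dvd (dvd_of_mem_factors hP')
    haveI : P'.LiesOver q := ⟨by
      refine (hqmax.eq_of_le (Ideal.IsPrime.comap _).ne_top ?_)
      rw [← Ideal.map_le_iff_le_comap]; exact hle⟩
    exact Nat.mul_pos
      (Nat.pos_of_ne_zero (Ideal.IsDedekindDomain.ramificationIdx'_ne_zero hI0 hP'prime hle))
      (Ideal.inertiaDeg'_pos q P')
  -- isolate the term at P₀
  rw [← Finset.add_sum_erase _ _ hP₀mem, hf1] at hsum
  set e₀ := Ideal.ramificationIdx' q P₀ with he₀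
  have he₀pos : 0 < e₀ :=
    Nat.pos_of_ne_zero (Ideal.IsDedekindDomain.ramificationIdx'_ne_zero hI0 ‹P₀.IsPrime› hIle)
  have hrest : ∑ x ∈ ((factors I).toFinset.erase P₀),
      Ideal.ramificationIdx' q x *
        Ideal.inertiaDeg' q x = 0 ∧ e₀ = 1 := by
    have hle' : p ≤ e₀ * p := Nat.le_mul_of_pos_left p he₀pos
    have he1 : e₀ * p = p := by omega
    exact ⟨by omega, Nat.eq_of_mul_eq_mul_right hp.pos (by rw [he1, one_mul])⟩
  have honly : ∀ P' ∈ (factors I).toFinset, P' = P₀ := by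
    intro P' hP'
    by_contra hne
    have hmem' : P' ∈ (factors I).toFinset.erase P₀ := Finset.mem_erase.mpr ⟨hne, hP'⟩
    have := Finset.sum_eq_zero_iff.mp hrest.1 P' hmem'
    exact (hpos P' hP').ne' this
  -- conclude: factors I = {P₀}
  have hfacts : normalizedFactors I = {P₀} := by
    have hall : ∀ x ∈ normalizedFactors I, x = P₀ := by
      intro x hx
      exact honly x (by rw [Multiset.mem_toFinset, factors_eq_normalizedFactors]; exact hx)
    have hrep := Multiset.eq_replicate_of_mem hall
    have hcount : Multiset.count P₀ (normalizedFactors I) = 1 := by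
      rw [← Ideal.IsDedekindDomain.ramificationIdx'_eq_normalizedFactors_count hI0
        ‹P₀.IsPrime› hP₀0]
      exact hrest.2
    rw [hrep, Multiset.count_replicate_self] at hcount
    rw [hrep, hcount, Multiset.replicate_one]
  have : I = P₀ := by
    have hassoc := prod_normalizedFactors hI0
    rw [hfacts, Multiset.prod_singleton, associated_iff_eq] at hassoc
    exact hassoc.symm
  exact this ▸ ‹P₀.IsPrime›
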